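/- Let T be a finite set, p_v ∈ [0,1] for each v ∈ T, and μ(X) = ∏_{v ∈ X} p_v · ∏_{v ∉ X} (1 - p_v). Suppose f, g : Set T → ℝ≥0 satisfy: f(X₁)·g(X₂) ≤ h(X₁ ∪ X₂) for all X₁, X₂ ⊆ T, where h : Set T → ℝ≥0. Then (∑_X μ(X) f(X))·(∑_X μ(X) g(X)) ≤ ∑_X μ(X) h(X), given that ∑_X μ(X) = 1. -/

import Mathlib

open Finset

/-- Application of the four-functions theorem to a product measure `μ`. -/
theorem four_functions_product_measure {ι : Type*} [DecidableEq ι] (T : Finset ι)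
    (p : ι → ℝ) (hp : ∀ v ∈ T, 0 ≤ p v ∧ p v ≤ 1)
    (μ f g h : Finset ι → ℝ)
    (hμ : ∀ X ⊆ T, μ X = (∏ v ∈ X, p v) * ∏ v ∈ T \ X, (1 - p v))
    (hf : ∀ X ⊆ T, 0 ≤ f X) (hg : ∀ X ⊆ T, 0 ≤ g X) (hh : ∀ X ⊆ T, 0 ≤ h X)
    (hfg : ∀ X₁ ⊆ T, ∀ X₂ ⊆ T, f X₁ * g X₂ ≤ h (X₁ ∪ X₂))
    (hsum : ∑ X ∈ T.powerset, μ X = 1) :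
    (∑ X ∈ T.powerset, μ X * f X) * (∑ X ∈ T.powerset, μ X * g X) ≤
      ∑ X ∈ T.powerset, μ X * h X := by
  classical
  -- μ as a product over T
  have hμ' : ∀ X ⊆ T, μ X = ∏ v ∈ T, (if v ∈ X then p v else 1 - p v) := by
    intro X hX
    rw [hμ X hX, Finset.prod_ite]
    have h1 : T.filter (· ∈ X) = X := by
      ext v; simp only [mem_filter]
      exact ⟨fun hv => hv.2, fun hv => ⟨hX hv, hv⟩⟩
    have h2 : T.filter (· ∉ X) = T \ X := by
      ext v; simp [mem_sdiff]
    rw [h1, h2]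
  have hμ0 : ∀ X ⊆ T, 0 ≤ μ X := by
    intro X hX
    rw [hμ' X hX]
    refine Finset.prod_nonneg fun v hv => ?_
    split_ifs
    · exact (hp v hv).1
    · linarith [(hp v hv).2]
  -- log-modularity
  have hmod : ∀ X₁ ⊆ T, ∀ X₂ ⊆ T, μ X₁ * μ X₂ = μ (X₁ ∩ X₂) * μ (X₁ ∪ X₂) := by
    intro X₁ h₁ X₂ h₂
    rw [hμ' X₁ h₁, hμ' X₂ h₂, hμ' (X₁ ∩ X₂) (le_trans inter_subset_left h₁),
      hμ' (X₁ ∪ X₂) (union_subset h₁ h₂), ← Finset.prod_mul_distrib,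
      ← Finset.prod_mul_distrib]
    refine Finset.prod_congr rfl fun v hv => ?_
    by_cases hv1 : v ∈ X₁ <;> by_cases hv2 : v ∈ X₂ <;>
      simp [hv1, hv2, mul_comm]
  -- define extended functions
  set F₁ : Finset ι → ℝ := fun X => if X ⊆ T then μ X * f X else 0 with hF₁
  set F₂ : Finset ι → ℝ := fun X => if X ⊆ T then μ X * g X else 0 with hF₂
  set F₃ : Finset ι → ℝ := fun X => if X ⊆ T then μ X else 0 with hF₃
  set F₄ : Finset ι → ℝ := fun X => if X ⊆ T then μ X * h X else 0 with hF₄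
  have nn : ∀ (φ : Finset ι → ℝ), (∀ X ⊆ T, 0 ≤ μ X * φ X) →
      (0 : Finset ι → ℝ) ≤ fun X => if X ⊆ T then μ X * φ X else 0 := by
    intro φ hφ X
    simp only [Pi.zero_apply]
    split_ifs with hX
    · exact hφ X hX
    · exact le_rfl
  have n₁ : 0 ≤ F₁ := nn f fun X hX => mul_nonneg (hμ0 X hX) (hf X hX)
  have n₂ : 0 ≤ F₂ := nn g fun X hX => mul_nonneg (hμ0 X hX) (hg X hX)
  have n₃ : 0 ≤ F₃ := by
    intro X; simp only [hF₃, Pi.zero_apply]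
    split_ifs with hX
    · exact hμ0 X hX
    · exact le_rfl
  have n₄ : 0 ≤ F₄ := nn h fun X hX => mul_nonneg (hμ0 X hX) (hh X hX)
  have key : ∀ ⦃s⦄, s ⊆ T → ∀ ⦃t⦄, t ⊆ T → F₁ s * F₂ t ≤ F₃ (s ∩ t) * F₄ (s ∪ t) := by
    intro s hs t ht
    simp only [hF₁, hF₂, hF₃, hF₄, if_pos hs, if_pos ht,
      if_pos (le_trans inter_subset_left hs), if_pos (union_subset hs ht)]
    calc μ s * f s * (μ t * g t) = μ s * μ t * (f s * g t) := by ring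
      _ ≤ μ (s ∩ t) * μ (s ∪ t) * h (s ∪ t) := by
          rw [hmod s hs t ht]
          exact mul_le_mul_of_nonneg_left (hfg s hs t ht)
            (mul_nonneg (hμ0 _ (le_trans inter_subset_left hs)) (hμ0 _ (union_subset hs ht)))
      _ = (if s ∩ t ⊆ T then μ (s ∩ t) else 0) * (μ (s ∪ t) * h (s ∪ t)) := by
          rw [if_pos (Finset.inter_subset_left.trans hs)]; ring
    rw [if_pos (Finset.inter_subset_left.trans hs)]
  have main := Finset.four_functions_theorem T n₁ n₂ n₃ n₄ key
    (Finset.Subset.refl T.powerset) (Finset.Subset.refl T.powerset)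
  rw [Finset.powerset_infs_powerset_self, Finset.powerset_sups_powerset_self] at main
  have e : ∀ (φ : Finset ι → ℝ),
      (∑ X ∈ T.powerset, if X ⊆ T then μ X * φ X else 0) = ∑ X ∈ T.powerset, μ X * φ X := by
    intro φ
    refine Finset.sum_congr rfl fun X hX => ?_
    rw [if_pos (Finset.mem_powerset.1 hX)]
  have e₃ : (∑ X ∈ T.powerset, if X ⊆ T then μ X else 0) = 1 := by
    rw [← hsum]
    exact Finset.sum_congr rfl fun X hX => if_pos (Finset.mem_powerset.1 hX)
  simp only [hF₁, hF₂, hF₃, hF₄] at main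
  rw [e f, e g, e h, e₃, one_mul] at main
  exact main
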